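/- Let X be a complex Banach space, A, B : X → X continuous linear operators, v ∈ X, h > 0, and q ≥ 1 an integer. Then exp(−h(A−B)) v = exp(−hA) v + ∑_{j=1}^{q} h^j φⱼ(−hA) (B ((B−A)^{j−1} v)) + ∫₀^h exp(−(h−ξ)A) ( ∫₀^ξ ((ξ−σ)^{q−1}/(q−1)!) · B ((B−A)^q (exp(−σ(A−B)) v)) dσ ) dξ, where φⱼ(−hA) := ∫₀¹ exp(−(1−θ)hA) θ^{j−1}/(j−1)! dθ. -/

import Mathlib

open intervalIntegral Finset

/-- The operator-valued φ-functions
`φⱼ(−hA) = ∫_0^1 exp(−(1−θ) h A) θ^{j−1}/(j−1)! dθ` (Bochner integral in `X →L[ℂ] X`). -/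
noncomputable def phiOp {X : Type*} [NormedAddCommGroup X] [NormedSpace ℂ X] [CompleteSpace X]
    (A : X →L[ℂ] X) (h : ℝ) (j : ℕ) : X →L[ℂ] X :=
  ∫ θ in (0 : ℝ)..1,
    (θ ^ (j - 1) / (j - 1).factorial : ℝ) •
      NormedSpace.exp ((-(((1 - θ) * h : ℝ) : ℂ)) • A)

section Aux

variable {X : Type*} [NormedAddCommGroup X] [NormedSpace ℂ X] [CompleteSpace X]

lemma expOp_hasDerivAt (M : X →L[ℂ] X) (t : ℝ) :
    HasDerivAt (fun s : ℝ => NormedSpace.exp (s • M)) (NormedSpace.exp (t • M) * M) t := by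
  simpa using hasDerivAt_exp_smul_const (𝕂 := ℝ) M t

lemma expOp_continuous (M : X →L[ℂ] X) :
    Continuous (fun s : ℝ => NormedSpace.exp (s • M)) :=
  continuous_iff_continuousAt.2 fun t => (expOp_hasDerivAt M t).continuousAt

lemma expOp_apply_continuous (M : X →L[ℂ] X) (v : X) :
    Continuous (fun s : ℝ => NormedSpace.exp (s • M) v) :=
  (expOp_continuous M).clm_apply continuous_const

lemma expOp_comm (M : X →L[ℂ] X) (t : ℝ) :
    M * NormedSpace.exp (t • M) = NormedSpace.exp (t • M) * M :=
  ((Commute.refl M).smul_right t).exp_right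

lemma expOp_apply_hasDerivAt (M : X →L[ℂ] X) (v : X) (t : ℝ) :
    HasDerivAt (fun s : ℝ => NormedSpace.exp (s • M) v)
      (M (NormedSpace.exp (t • M) v)) t := by
  have h := ((ContinuousLinearMap.apply ℂ X v).restrictScalars ℝ).hasFDerivAt.comp_hasDerivAt t
      (expOp_hasDerivAt M t)
  have heq : (NormedSpace.exp (t • M) * M) v = M (NormedSpace.exp (t • M) v) := by
    rw [← expOp_comm]; rfl
  simpa [Function.comp_def, heq] using h

/-- Taylor expansion with integral remainder of `exp(ξ M) v`. -/
lemma taylor_exp (M : X →L[ℂ] X) (v : X) (n : ℕ) (hn : 1 ≤ n) (ξ : ℝ) :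
    NormedSpace.exp (ξ • M) v =
      (∑ k ∈ Finset.range n, (ξ ^ k / k.factorial : ℝ) • (M ^ k) v) +
      ∫ σ in (0:ℝ)..ξ, ((ξ - σ) ^ (n - 1) / (n - 1).factorial : ℝ) •
        (M ^ n) (NormedSpace.exp (σ • M) v) := by
  induction n, hn using Nat.le_induction with
  | base =>
    have hderiv : ∀ σ ∈ Set.uIcc (0:ℝ) ξ, HasDerivAt (fun s : ℝ => NormedSpace.exp (s • M) v)
        (M (NormedSpace.exp (σ • M) v)) σ := fun σ _ => expOp_apply_hasDerivAt M v σ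
    have hint : IntervalIntegrable (fun σ : ℝ => M (NormedSpace.exp (σ • M) v))
        MeasureTheory.volume 0 ξ :=
      (M.continuous.comp (expOp_apply_continuous M v)).intervalIntegrable _ _
    have hFTC := intervalIntegral.integral_eq_sub_of_hasDerivAt hderiv hint
    simp only [zero_smul, NormedSpace.exp_zero, ContinuousLinearMap.one_apply] at hFTC
    simp [hFTC]
  | succ n hn ih =>
    have hcontf : Continuous fun σ : ℝ => (M ^ n) (NormedSpace.exp (σ • M) v) :=
      (M ^ n).continuous.comp (expOp_apply_continuous M v)
    have hcontf' : Continuous fun σ : ℝ => (M ^ (n+1)) (NormedSpace.exp (σ • M) v) :=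
      (M ^ (n+1)).continuous.comp (expOp_apply_continuous M v)
    have hc : ∀ σ : ℝ, HasDerivAt (fun s : ℝ => -((ξ - s) ^ n / n.factorial : ℝ))
        (((ξ - σ) ^ (n - 1) / (n - 1).factorial : ℝ)) σ := by
      intro σ
      have h1 : HasDerivAt (fun s : ℝ => ξ - s) (-1) σ := (hasDerivAt_id σ).const_sub ξ
      have h2 := h1.pow n
      have h3 := (h2.div_const (n.factorial : ℝ)).neg
      refine h3.congr_deriv ?_
      have hnf : (n.factorial : ℝ) = n * (n - 1).factorial := by
        rw_mod_cast [Nat.mul_factorial_pred (by omega)]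
      have hfacpos : ((n-1).factorial : ℝ) ≠ 0 := by positivity
      have hn0 : (n:ℝ) ≠ 0 := by exact_mod_cast (show n ≠ 0 by omega)
      rw [hnf]
      field_simp
    have hf' : ∀ σ : ℝ, HasDerivAt (fun s : ℝ => (M ^ n) (NormedSpace.exp (s • M) v))
        ((M ^ (n+1)) (NormedSpace.exp (σ • M) v)) σ := by
      intro σ
      have h := ((M ^ n).restrictScalars ℝ).hasFDerivAt.comp_hasDerivAt σ
        (expOp_apply_hasDerivAt M v σ)
      simpa [Function.comp_def, pow_succ, ContinuousLinearMap.mul_apply] using h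
    have hG : ∀ σ ∈ Set.uIcc (0:ℝ) ξ, HasDerivAt
        (fun s : ℝ => (-((ξ - s) ^ n / n.factorial : ℝ)) • (M ^ n) (NormedSpace.exp (s • M) v))
        ((((ξ - σ) ^ (n - 1) / (n - 1).factorial : ℝ)) • (M ^ n) (NormedSpace.exp (σ • M) v) +
          (-((ξ - σ) ^ n / n.factorial : ℝ)) • (M ^ (n+1)) (NormedSpace.exp (σ • M) v)) σ := by
      intro σ _
      have := (hc σ).smul (hf' σ)
      rw [add_comm] at this
      exact this
    have hint1 : IntervalIntegrable
        (fun σ : ℝ => (((ξ - σ) ^ (n - 1) / (n - 1).factorial : ℝ)) •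
          (M ^ n) (NormedSpace.exp (σ • M) v)) MeasureTheory.volume 0 ξ :=
      ((((continuous_const.sub continuous_id).pow _).div_const _).smul hcontf).intervalIntegrable _ _
    have hint2 : IntervalIntegrable
        (fun σ : ℝ => (-((ξ - σ) ^ n / n.factorial : ℝ)) •
          (M ^ (n+1)) (NormedSpace.exp (σ • M) v)) MeasureTheory.volume 0 ξ :=
      (((((continuous_const.sub continuous_id).pow _).div_const _).neg).smul
        hcontf').intervalIntegrable _ _
    have hFTC := intervalIntegral.integral_eq_sub_of_hasDerivAt hG (hint1.add hint2)
    rw [intervalIntegral.integral_add hint1 hint2] at hFTC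
    have hz : ((ξ - ξ) ^ n : ℝ) = 0 := by
      rw [sub_self]; exact zero_pow (by omega)
    rw [hz] at hFTC
    simp only [neg_zero, zero_div, neg_smul, zero_smul, neg_neg, sub_zero, zero_sub, sub_neg_eq_add,
      zero_add, zero_smul, NormedSpace.exp_zero, ContinuousLinearMap.one_apply] at hFTC
    rw [intervalIntegral.integral_neg] at hFTC
    have key : (∫ σ in (0:ℝ)..ξ, (((ξ - σ) ^ (n - 1) / (n - 1).factorial : ℝ)) •
          (M ^ n) (NormedSpace.exp (σ • M) v)) =
        ((ξ ^ n / n.factorial : ℝ)) • (M ^ n) v +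
        ∫ σ in (0:ℝ)..ξ, (((ξ - σ) ^ n / n.factorial : ℝ)) •
          (M ^ (n+1)) (NormedSpace.exp (σ • M) v) := by
      rw [← hFTC]; abel
    simp only [Nat.add_sub_cancel]
    rw [ih, key, Finset.sum_range_succ]
    abel

lemma phi_apply_eq (A : X →L[ℂ] X) (h : ℝ) (hh : 0 < h) (j : ℕ) (hj : 1 ≤ j) (w : X) :
    (h ^ j : ℝ) • (phiOp A h j) w =
      ∫ ξ in (0:ℝ)..h, (ξ ^ (j - 1) / (j - 1).factorial : ℝ) •
        NormedSpace.exp ((ξ - h) • A) w := by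
  have harg : ∀ θ : ℝ, (-(((1 - θ) * h : ℝ) : ℂ)) • A = ((θ * h - h : ℝ)) • A := by
    intro θ
    have h1 : (-(((1 - θ) * h : ℝ) : ℂ)) • A = (-((1 - θ) * h) : ℝ) • A := by norm_cast
    rw [h1, show (-((1 - θ) * h) : ℝ) = θ * h - h by ring]
  have hcont : Continuous fun θ : ℝ => (θ ^ (j - 1) / (j - 1).factorial : ℝ) •
      NormedSpace.exp (((θ * h - h : ℝ)) • A) :=
    ((continuous_id.pow _).div_const _).smul
      ((expOp_continuous A).comp ((continuous_id.mul continuous_const).sub continuous_const))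
  have hphi : phiOp A h j = ∫ θ in (0:ℝ)..1, (θ ^ (j - 1) / (j - 1).factorial : ℝ) •
      NormedSpace.exp (((θ * h - h : ℝ)) • A) := by
    unfold phiOp
    exact intervalIntegral.integral_congr fun θ _ => by rw [harg θ]
  have happ : phiOp A h j w = ∫ θ in (0:ℝ)..1, (θ ^ (j - 1) / (j - 1).factorial : ℝ) •
      NormedSpace.exp ((θ * h - h : ℝ) • A) w := by
    rw [hphi, ContinuousLinearMap.intervalIntegral_apply (hcont.intervalIntegrable 0 1) w]
    exact intervalIntegral.integral_congr fun θ _ => by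
      simp [ContinuousLinearMap.smul_apply]
  set f : ℝ → X :=
    fun x => (x ^ (j - 1) / (j - 1).factorial : ℝ) • NormedSpace.exp ((x - h : ℝ) • A) w with hfdef
  have hsub := intervalIntegral.smul_integral_comp_mul_left (a := (0:ℝ)) (b := 1) f h
  have hfy : ∀ θ : ℝ, f (h * θ) =
      (h ^ (j - 1) : ℝ) • ((θ ^ (j - 1) / (j - 1).factorial : ℝ) •
        NormedSpace.exp ((θ * h - h : ℝ) • A) w) := by
    intro θ
    simp only [hfdef]
    rw [show h * θ - h = θ * h - h by ring, mul_pow, smul_smul, mul_div_assoc]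
  rw [intervalIntegral.integral_congr (g := fun θ : ℝ => (h ^ (j - 1) : ℝ) •
      ((θ ^ (j - 1) / (j - 1).factorial : ℝ) • NormedSpace.exp ((θ * h - h : ℝ) • A) w))
      (fun θ _ => hfy θ), intervalIntegral.integral_smul] at hsub
  rw [mul_zero, mul_one] at hsub
  have hpow : (h ^ j : ℝ) = h * h ^ (j - 1) := by
    conv_lhs => rw [show j = (j - 1) + 1 by omega]
    rw [pow_succ]; ring
  rw [← hsub, hpow, mul_smul, happ]

end Aux

set_option maxHeartbeats 2000000 in
/-- Taylor expansion with integral remainder of the exact solution `exp(−h(A−B)) v`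
inserted into the variation-of-constants formula:
`exp(−h(A−B)) v = exp(−hA) v + ∑_{j=1}^q h^j φⱼ(−hA) (B ((B−A)^{j−1} v))`
`+ ∫_0^h exp(−(h−ξ)A) (∫_0^ξ ((ξ−σ)^{q−1}/(q−1)!) • B ((B−A)^q (exp(−σ(A−B)) v)) dσ) dξ`. -/
theorem exp_expansion {X : Type*} [NormedAddCommGroup X] [NormedSpace ℂ X] [CompleteSpace X]
    (A B : X →L[ℂ] X) (v : X) (h : ℝ) (hh : 0 < h) (q : ℕ) (hq : 1 ≤ q) :
    NormedSpace.exp ((-(h : ℂ)) • (A - B)) v =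
      NormedSpace.exp ((-(h : ℂ)) • A) v +
        (∑ j ∈ Finset.Icc 1 q,
          (h ^ j : ℝ) • (phiOp A h j) (B (((B - A) ^ (j - 1)) v))) +
        ∫ ξ in (0 : ℝ)..h,
          NormedSpace.exp ((-((h - ξ : ℝ) : ℂ)) • A)
            (∫ σ in (0 : ℝ)..ξ,
              ((ξ - σ) ^ (q - 1) / (q - 1).factorial : ℝ) •
                B (((B - A) ^ q) (NormedSpace.exp ((-(σ : ℂ)) • (A - B)) v))) := by
  have hco : ∀ (r : ℝ) (M : X →L[ℂ] X), (-(r : ℂ)) • M = (-r) • M := fun r M => by norm_cast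
  have hAB : ∀ r : ℝ, (-r) • (A - B) = r • (B - A) := fun r => by
    rw [neg_smul, ← smul_neg, neg_sub]
  simp only [hco, neg_sub, hAB]
  -- variation of constants
  have hderivf : ∀ ξ : ℝ, HasDerivAt
      (fun s : ℝ => (NormedSpace.exp ((s - h) • A) * NormedSpace.exp (s • (B - A))) v)
      (NormedSpace.exp ((ξ - h) • A) (B (NormedSpace.exp (ξ • (B - A)) v))) ξ := by
    intro ξ
    have h1 : HasDerivAt (fun s : ℝ => NormedSpace.exp ((s - h) • A))
        (NormedSpace.exp ((ξ - h) • A) * A) ξ := by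
      simpa [Function.comp_def] using (expOp_hasDerivAt A (ξ - h)).scomp ξ ((hasDerivAt_id ξ).sub_const h)
    have h3 := h1.mul (expOp_hasDerivAt (B - A) ξ)
    have heq : NormedSpace.exp ((ξ - h) • A) * A * NormedSpace.exp (ξ • (B - A)) +
        NormedSpace.exp ((ξ - h) • A) * (NormedSpace.exp (ξ • (B - A)) * (B - A)) =
        NormedSpace.exp ((ξ - h) • A) * (B * NormedSpace.exp (ξ • (B - A))) := by
      rw [← expOp_comm (B - A) ξ]
      noncomm_ring
    rw [heq] at h3
    have h4 := ((ContinuousLinearMap.apply ℂ X v).restrictScalars ℝ).hasFDerivAt.comp_hasDerivAt ξ h3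
    simpa [Function.comp_def, ContinuousLinearMap.mul_apply] using h4
  have hcontU : Continuous fun ξ : ℝ => NormedSpace.exp (ξ • (B - A)) v :=
    expOp_apply_continuous (B - A) v
  have hcontE : Continuous fun ξ : ℝ => NormedSpace.exp ((ξ - h) • A) :=
    (expOp_continuous A).comp (continuous_id.sub continuous_const)
  have hcont_tot : Continuous fun ξ : ℝ =>
      NormedSpace.exp ((ξ - h) • A) (B (NormedSpace.exp (ξ • (B - A)) v)) :=
    hcontE.clm_apply (B.continuous.comp hcontU)
  have hvoc := intervalIntegral.integral_eq_sub_of_hasDerivAt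
      (fun ξ (_ : ξ ∈ Set.uIcc (0:ℝ) h) => hderivf ξ) (hcont_tot.intervalIntegrable 0 h)
  simp only [sub_self, zero_smul, NormedSpace.exp_zero, one_mul, mul_one, zero_sub,
    ContinuousLinearMap.one_apply, ContinuousLinearMap.mul_apply] at hvoc
  -- pointwise Taylor expansion of the integrand
  have hcontinner : ∀ ξ : ℝ, Continuous fun σ : ℝ =>
      ((ξ - σ) ^ (q - 1) / (q - 1).factorial : ℝ) •
        ((B - A) ^ q) (NormedSpace.exp (σ • (B - A)) v) :=
    fun ξ => (((continuous_const.sub continuous_id).pow _).div_const _).smul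
      (((B - A) ^ q).continuous.comp hcontU)
  have hpt : ∀ ξ : ℝ,
      NormedSpace.exp ((ξ - h) • A) (B (NormedSpace.exp (ξ • (B - A)) v)) =
      (∑ k ∈ Finset.range q, (ξ ^ k / k.factorial : ℝ) •
        NormedSpace.exp ((ξ - h) • A) (B (((B - A) ^ k) v))) +
      NormedSpace.exp ((ξ - h) • A) (∫ σ in (0:ℝ)..ξ,
        ((ξ - σ) ^ (q - 1) / (q - 1).factorial : ℝ) •
          B (((B - A) ^ q) (NormedSpace.exp (σ • (B - A)) v))) := by
    intro ξ
    have ht := taylor_exp (B - A) v q hq ξ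
    have hBi : B (∫ σ in (0:ℝ)..ξ, ((ξ - σ) ^ (q - 1) / (q - 1).factorial : ℝ) •
          ((B - A) ^ q) (NormedSpace.exp (σ • (B - A)) v)) =
        ∫ σ in (0:ℝ)..ξ, ((ξ - σ) ^ (q - 1) / (q - 1).factorial : ℝ) •
          B (((B - A) ^ q) (NormedSpace.exp (σ • (B - A)) v)) := by
      rw [← B.intervalIntegral_comp_comm ((hcontinner ξ).intervalIntegrable 0 ξ)]
      exact intervalIntegral.integral_congr fun σ _ => by simp
    rw [ht, map_add, map_add, hBi]
    congr 1
    simp [map_sum]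
  have hScont : Continuous fun ξ : ℝ => ∑ k ∈ Finset.range q, (ξ ^ k / k.factorial : ℝ) •
      NormedSpace.exp ((ξ - h) • A) (B (((B - A) ^ k) v)) :=
    continuous_finset_sum _ fun k _ => ((continuous_id.pow _).div_const _).smul
      (hcontE.clm_apply continuous_const)
  have hSint : ∀ k : ℕ, IntervalIntegrable (fun ξ : ℝ => (ξ ^ k / k.factorial : ℝ) •
        NormedSpace.exp ((ξ - h) • A) (B (((B - A) ^ k) v))) MeasureTheory.volume 0 h :=
    fun k => (((continuous_id.pow _).div_const _).smul
      (hcontE.clm_apply continuous_const)).intervalIntegrable _ _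
  have hRint : IntervalIntegrable (fun ξ : ℝ => NormedSpace.exp ((ξ - h) • A)
      (∫ σ in (0:ℝ)..ξ, ((ξ - σ) ^ (q - 1) / (q - 1).factorial : ℝ) •
        B (((B - A) ^ q) (NormedSpace.exp (σ • (B - A)) v)))) MeasureTheory.volume 0 h := by
    have hfe : (fun ξ : ℝ => NormedSpace.exp ((ξ - h) • A)
        (∫ σ in (0:ℝ)..ξ, ((ξ - σ) ^ (q - 1) / (q - 1).factorial : ℝ) •
          B (((B - A) ^ q) (NormedSpace.exp (σ • (B - A)) v)))) =
        fun ξ : ℝ => NormedSpace.exp ((ξ - h) • A) (B (NormedSpace.exp (ξ • (B - A)) v)) -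
          ∑ k ∈ Finset.range q, (ξ ^ k / k.factorial : ℝ) •
            NormedSpace.exp ((ξ - h) • A) (B (((B - A) ^ k) v)) :=
      funext fun ξ => by rw [hpt ξ]; abel
    rw [hfe]
    exact (hcont_tot.intervalIntegrable 0 h).sub (hScont.intervalIntegrable 0 h)
  have hsplit : (∫ ξ in (0:ℝ)..h,
        NormedSpace.exp ((ξ - h) • A) (B (NormedSpace.exp (ξ • (B - A)) v))) =
      (∫ ξ in (0:ℝ)..h, ∑ k ∈ Finset.range q, (ξ ^ k / k.factorial : ℝ) •
        NormedSpace.exp ((ξ - h) • A) (B (((B - A) ^ k) v))) +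
      ∫ ξ in (0:ℝ)..h, NormedSpace.exp ((ξ - h) • A)
        (∫ σ in (0:ℝ)..ξ, ((ξ - σ) ^ (q - 1) / (q - 1).factorial : ℝ) •
          B (((B - A) ^ q) (NormedSpace.exp (σ • (B - A)) v))) := by
    rw [← intervalIntegral.integral_add (hScont.intervalIntegrable 0 h) hRint]
    exact intervalIntegral.integral_congr fun ξ _ => hpt ξ
  have hSval : (∫ ξ in (0:ℝ)..h, ∑ k ∈ Finset.range q, (ξ ^ k / k.factorial : ℝ) •
        NormedSpace.exp ((ξ - h) • A) (B (((B - A) ^ k) v))) =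
      ∑ j ∈ Finset.Icc 1 q, (h ^ j : ℝ) • phiOp A h j (B (((B - A) ^ (j - 1)) v)) := by
    rw [intervalIntegral.integral_finset_sum fun k _ => hSint k]
    rw [← Finset.Ico_add_one_right_eq_Icc, Finset.sum_Ico_eq_sum_range]
    simp only [Nat.add_sub_cancel, Nat.add_sub_cancel_left]
    refine Finset.sum_congr rfl fun k _ => ?_
    rw [phi_apply_eq A h hh (1 + k) (by omega)]
    simp only [Nat.add_sub_cancel, Nat.add_sub_cancel_left]
  have hmain : NormedSpace.exp (h • (B - A)) v =
      NormedSpace.exp ((-h) • A) v + ∫ ξ in (0:ℝ)..h,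
        NormedSpace.exp ((ξ - h) • A) (B (NormedSpace.exp (ξ • (B - A)) v)) := by
    rw [hvoc]; abel
  rw [hmain, hsplit, hSval]
  abel
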